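/- arXiv:2208.04796 — 2 statements merged into one kernel-verified Lean document; each statement's English description precedes it below -/
import Mathlib

section
/- Convolution of normal and exponential tails, normal-dominated case: let X be standard normal and E standard exponential, independent; let (η_N) and (x_N) be sequences with η_N > 0, x_N → ∞, and x_N/η_N → ∞, and let μ > 0. If (x_N − μη_N²)/(√2·η_N) → ∞ as N→∞, then P(η_N·X + E/μ > x_N) is asymptotically equivalent, as N→∞, to (η_N/(√(2π)·x_N))·exp(−x_N²/(2η_N²)) + exp((μ/2)·(μη_N² − 2x_N)). -/
open MeasureTheory ProbabilityTheory Filter Real Set Topology Asymptotics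

noncomputable section

/-- The Gauss error function `erf x = (2/√π) ∫_0^x e^{-t²} dt`. -/
def erf (x : ℝ) : ℝ := (2 / Real.sqrt π) * ∫ t in (0 : ℝ)..x, Real.exp (-t ^ 2)

open scoped ENNReal NNReal

section Aux

lemma expMeasure_Ioi' (a : ℝ) : expMeasure 1 (Ioi a) = ENNReal.ofReal (rexp (-(a ⊔ 0))) := by
  haveI : IsProbabilityMeasure (expMeasure 1) := isProbabilityMeasure_expMeasure one_pos
  have h1 : expMeasure 1 (Iic a) = ENNReal.ofReal (cdf (expMeasure 1) a) := by
    have := cdf_eq_real (μ := expMeasure 1) a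
    rw [this, measureReal_def, ENNReal.ofReal_toReal (measure_ne_top _ _)]
  have h2 : Ioi a = (Iic a)ᶜ := by simp
  rw [h2, measure_compl measurableSet_Iic (measure_ne_top _ _), measure_univ, h1,
    cdf_expMeasure_eq one_pos]
  split_ifs with h
  · have he : rexp (-(1 * a)) ≤ 1 := Real.exp_le_one_iff.mpr (by linarith)
    have h1' : (1 : ℝ≥0∞) = ENNReal.ofReal 1 := ENNReal.ofReal_one.symm
    rw [sup_of_le_left h, h1', ← ENNReal.ofReal_sub _ (by linarith)]
    norm_num
  · simp [sup_of_le_right (le_of_not_ge h)]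

lemma pdf_shift' {η x μ s : ℝ} (hs : s ≤ x / η) (hη : 0 < η) (hμ : 0 ≤ μ) :
    rexp (-((x - η * s) * μ ⊔ 0)) * gaussianPDFReal 0 1 s
      = rexp (μ / 2 * (μ * η ^ 2 - 2 * x)) * gaussianPDFReal (μ * η) 1 s := by
  have hxs : 0 ≤ (x - η * s) * μ :=
    mul_nonneg (by rw [sub_nonneg]; exact (le_div_iff₀' hη).mp hs) hμ
  rw [sup_of_le_left hxs]
  simp only [gaussianPDFReal]
  push_cast
  rw [mul_left_comm, ← Real.exp_add, mul_left_comm, ← Real.exp_add]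
  congr 2
  ring

lemma prod_formula' {η x μ : ℝ} (hη : 0 < η) (hμ : 0 < μ) :
    ((gaussianReal 0 1).prod (expMeasure 1)) {p : ℝ × ℝ | η * p.1 + p.2 / μ > x}
      = gaussianReal 0 1 (Ioi (x / η))
        + ENNReal.ofReal (rexp (μ / 2 * (μ * η ^ 2 - 2 * x)))
          * gaussianReal 0 1 (Iic ((x - μ * η ^ 2) / η)) := by
  haveI : IsProbabilityMeasure (expMeasure 1) := isProbabilityMeasure_expMeasure one_pos
  have hS : MeasurableSet {p : ℝ × ℝ | η * p.1 + p.2 / μ > x} := by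
    apply measurableSet_lt measurable_const
    fun_prop
  rw [Measure.prod_apply hS]
  have hint : ∀ s : ℝ, expMeasure 1 (Prod.mk s ⁻¹' {p : ℝ × ℝ | η * p.1 + p.2 / μ > x})
      = ENNReal.ofReal (rexp (-((x - η * s) * μ ⊔ 0))) := by
    intro s
    have hpre : (Prod.mk s ⁻¹' {p : ℝ × ℝ | η * p.1 + p.2 / μ > x})
        = Ioi ((x - η * s) * μ) := by
      ext t
      simp only [mem_preimage, mem_setOf_eq, mem_Ioi, gt_iff_lt]
      rw [← lt_div_iff₀ hμ, sub_lt_iff_lt_add']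
    rw [hpre, expMeasure_Ioi']
  rw [lintegral_congr hint]
  rw [← lintegral_add_compl _ (measurableSet_Iic (a := x / η)), compl_Iic]
  have hIoi : ∫⁻ s in Ioi (x / η), ENNReal.ofReal (rexp (-((x - η * s) * μ ⊔ 0)))
        ∂(gaussianReal 0 1) = gaussianReal 0 1 (Ioi (x / η)) := by
    rw [setLIntegral_congr_fun measurableSet_Ioi ?_, setLIntegral_one]
    intro s hs
    have : (x - η * s) * μ ≤ 0 := by
      apply mul_nonpos_of_nonpos_of_nonneg _ hμ.le
      rw [sub_nonpos]
      exact ((div_lt_iff₀' hη).mp hs).le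
    dsimp only
    rw [sup_of_le_right this, neg_zero, Real.exp_zero, ENNReal.ofReal_one]
  have hIic : ∫⁻ s in Iic (x / η), ENNReal.ofReal (rexp (-((x - η * s) * μ ⊔ 0)))
        ∂(gaussianReal 0 1)
      = ENNReal.ofReal (rexp (μ / 2 * (μ * η ^ 2 - 2 * x)))
          * gaussianReal 0 1 (Iic ((x - μ * η ^ 2) / η)) := by
    have step1 : ∫⁻ s in Iic (x / η), ENNReal.ofReal (rexp (-((x - η * s) * μ ⊔ 0)))
          ∂(gaussianReal 0 1)
        = ENNReal.ofReal (rexp (μ / 2 * (μ * η ^ 2 - 2 * x)))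
            * gaussianReal (μ * η) 1 (Iic (x / η)) := by
      rw [gaussianReal_of_var_ne_zero 0 one_ne_zero, restrict_withDensity measurableSet_Iic,
        lintegral_withDensity_eq_lintegral_mul _ (measurable_gaussianPDF 0 1) (by fun_prop)]
      have heq : ∀ s ∈ Iic (x / η),
          (gaussianPDF 0 1 * fun s => ENNReal.ofReal (rexp (-((x - η * s) * μ ⊔ 0)))) s
            = ENNReal.ofReal (rexp (μ / 2 * (μ * η ^ 2 - 2 * x))) * gaussianPDF (μ * η) 1 s := by
        intro s hs
        simp only [Pi.mul_apply, gaussianPDF]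
        rw [← ENNReal.ofReal_mul (gaussianPDFReal_nonneg 0 1 s), mul_comm (gaussianPDFReal 0 1 s),
          pdf_shift' hs hη hμ.le, ENNReal.ofReal_mul (Real.exp_nonneg _)]
      rw [setLIntegral_congr_fun measurableSet_Iic heq, lintegral_const_mul _
        (measurable_gaussianPDF _ 1), ← gaussianReal_apply _ one_ne_zero]
    have step2 : gaussianReal (μ * η) 1 (Iic (x / η))
        = gaussianReal 0 1 (Iic ((x - μ * η ^ 2) / η)) := by
      have hmap := gaussianReal_map_add_const (μ := 0) (v := 1) (μ * η)
      rw [zero_add] at hmap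
      rw [← hmap, Measure.map_apply (measurable_add_const _) measurableSet_Iic]
      congr 1
      have hz : (x - μ * η ^ 2) / η = x / η - μ * η := by field_simp
      rw [hz]
      ext s
      simp only [mem_preimage, mem_Iic, le_sub_iff_add_le]
    rw [step1, step2]
  rw [hIic, hIoi, add_comm]

lemma exp_sq_integrable' : Integrable (fun t : ℝ => rexp (-(t ^ 2) / 2)) := by
  have h := integrable_exp_neg_mul_sq (show (0:ℝ) < 1/2 by norm_num)
  exact h.congr (ae_of_all _ fun t => by ring_nf)

lemma deriv1' (t : ℝ) : HasDerivAt (fun t : ℝ => -rexp (-(t ^ 2) / 2))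
    (t * rexp (-(t ^ 2) / 2)) t := by
  have h : HasDerivAt (fun t : ℝ => -(t ^ 2) / 2) (-t) t := by
    have := ((hasDerivAt_pow 2 t).neg.div_const 2)
    refine this.congr_deriv ?_
    ring
  have := h.exp.neg
  refine this.congr_deriv ?_
  ring

lemma deriv2' {t : ℝ} (ht : 0 < t) : HasDerivAt (fun t : ℝ => -rexp (-(t ^ 2) / 2) / t)
    ((1 + (t ^ 2)⁻¹) * rexp (-(t ^ 2) / 2)) t := by
  have h := (deriv1' t).div (hasDerivAt_id t) ht.ne'
  refine h.congr_deriv ?_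
  simp only [id]
  field_simp
  ring

lemma tendsto_exp_sq' : Tendsto (fun t : ℝ => rexp (-(t ^ 2) / 2)) atTop (𝓝 0) := by
  apply Real.tendsto_exp_atBot.comp
  apply Tendsto.atBot_div_const (by norm_num : (0:ℝ) < 2)
  exact tendsto_neg_atBot_iff.mpr (tendsto_pow_atTop two_ne_zero)

lemma int1' {y : ℝ} (hy : 0 < y) :
    ∫ t in Ioi y, t * rexp (-(t ^ 2) / 2) = rexp (-(y ^ 2) / 2) := by
  have := integral_Ioi_of_hasDerivAt_of_nonneg' (fun t ht => deriv1' t)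
    (fun t ht => mul_nonneg (hy.trans ht).le (Real.exp_nonneg _)) tendsto_exp_sq'.neg
  simpa using this

lemma int1_integrable' {y : ℝ} (hy : 0 < y) :
    IntegrableOn (fun t => t * rexp (-(t ^ 2) / 2)) (Ioi y) :=
  integrableOn_Ioi_deriv_of_nonneg' (fun t ht => deriv1' t)
    (fun t ht => mul_nonneg (hy.trans ht).le (Real.exp_nonneg _)) tendsto_exp_sq'.neg

lemma int2' {y : ℝ} (hy : 0 < y) :
    ∫ t in Ioi y, (1 + (t ^ 2)⁻¹) * rexp (-(t ^ 2) / 2) = rexp (-(y ^ 2) / 2) / y := by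
  have htend : Tendsto (fun t : ℝ => -rexp (-(t ^ 2) / 2) / t) atTop (𝓝 0) := by
    have := (tendsto_exp_sq'.neg.mul tendsto_inv_atTop_zero)
    simpa [div_eq_mul_inv] using this
  have := integral_Ioi_of_hasDerivAt_of_nonneg' (fun t ht => deriv2' (hy.trans_le ht))
    (fun t ht => mul_nonneg (by positivity) (Real.exp_nonneg _)) htend
  rw [this]
  field_simp
  ring

lemma int2_integrable' {y : ℝ} (hy : 0 < y) :
    IntegrableOn (fun t => (1 + (t ^ 2)⁻¹) * rexp (-(t ^ 2) / 2)) (Ioi y) := by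
  have htend : Tendsto (fun t : ℝ => -rexp (-(t ^ 2) / 2) / t) atTop (𝓝 0) := by
    have := (tendsto_exp_sq'.neg.mul tendsto_inv_atTop_zero)
    simpa [div_eq_mul_inv] using this
  exact integrableOn_Ioi_deriv_of_nonneg' (fun t ht => deriv2' (hy.trans_le ht))
    (fun t ht => mul_nonneg (by positivity) (Real.exp_nonneg _)) htend

lemma tail_upper' {y : ℝ} (hy : 0 < y) :
    ∫ t in Ioi y, rexp (-(t ^ 2) / 2) ≤ rexp (-(y ^ 2) / 2) / y := by
  have hmono : ∀ t ∈ Ioi y, rexp (-(t ^ 2) / 2) ≤ y⁻¹ * (t * rexp (-(t ^ 2) / 2)) := by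
    intro t ht
    rw [← mul_assoc]
    apply le_mul_of_one_le_left (Real.exp_nonneg _)
    rw [← div_eq_inv_mul, le_div_iff₀ hy]
    simpa using ht.le
  calc ∫ t in Ioi y, rexp (-(t ^ 2) / 2)
      ≤ ∫ t in Ioi y, y⁻¹ * (t * rexp (-(t ^ 2) / 2)) :=
        setIntegral_mono_on exp_sq_integrable'.integrableOn
          ((int1_integrable' hy).const_mul _) measurableSet_Ioi hmono
    _ = y⁻¹ * ∫ t in Ioi y, t * rexp (-(t ^ 2) / 2) := integral_const_mul _ _
    _ = rexp (-(y ^ 2) / 2) / y := by rw [int1' hy, inv_mul_eq_div]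

lemma tail_lower' {y : ℝ} (hy : 0 < y) :
    rexp (-(y ^ 2) / 2) / y ≤ (1 + (y ^ 2)⁻¹) * ∫ t in Ioi y, rexp (-(t ^ 2) / 2) := by
  have hmono : ∀ t ∈ Ioi y, (1 + (t ^ 2)⁻¹) * rexp (-(t ^ 2) / 2)
      ≤ (1 + (y ^ 2)⁻¹) * rexp (-(t ^ 2) / 2) := by
    intro t ht
    apply mul_le_mul_of_nonneg_right _ (Real.exp_nonneg _)
    have : y ^ 2 ≤ t ^ 2 := by nlinarith [(mem_Ioi.mp ht).le, hy.le]
    have h2 : (0:ℝ) < y ^ 2 := by positivity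
    gcongr
  calc rexp (-(y ^ 2) / 2) / y = ∫ t in Ioi y, (1 + (t ^ 2)⁻¹) * rexp (-(t ^ 2) / 2) :=
        (int2' hy).symm
    _ ≤ ∫ t in Ioi y, (1 + (y ^ 2)⁻¹) * rexp (-(t ^ 2) / 2) :=
        setIntegral_mono_on (int2_integrable' hy)
          (exp_sq_integrable'.integrableOn.const_mul _) measurableSet_Ioi hmono
    _ = (1 + (y ^ 2)⁻¹) * ∫ t in Ioi y, rexp (-(t ^ 2) / 2) := integral_const_mul _ _

lemma Q_eq' (y : ℝ) : (gaussianReal 0 1 (Ioi y)).toReal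
    = (Real.sqrt (2 * π))⁻¹ * ∫ t in Ioi y, rexp (-(t ^ 2) / 2) := by
  rw [gaussianReal_apply_eq_integral 0 one_ne_zero, ENNReal.toReal_ofReal]
  · rw [← integral_const_mul]
    congr 1
    ext t
    simp [gaussianPDFReal]
  · apply setIntegral_nonneg measurableSet_Ioi
    exact fun t _ => gaussianPDFReal_nonneg 0 1 t

lemma mills' : Tendsto (fun y : ℝ =>
    (gaussianReal 0 1 (Ioi y)).toReal / (rexp (-(y ^ 2) / 2) / (Real.sqrt (2 * π) * y)))
    atTop (𝓝 1) := by
  have hsq : (0:ℝ) < Real.sqrt (2 * π) := Real.sqrt_pos.mpr (by positivity)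
  have key : ∀ᶠ y in atTop, (gaussianReal 0 1 (Ioi y)).toReal
      / (rexp (-(y ^ 2) / 2) / (Real.sqrt (2 * π) * y))
      = (∫ t in Ioi y, rexp (-(t ^ 2) / 2)) * y / rexp (-(y ^ 2) / 2) := by
    filter_upwards [eventually_gt_atTop 0] with y hy
    rw [Q_eq']
    have he : rexp (-(y ^ 2) / 2) ≠ 0 := (Real.exp_pos _).ne'
    field_simp
  rw [tendsto_congr' key]
  apply tendsto_of_tendsto_of_tendsto_of_le_of_le' (g := fun y : ℝ => (1 + (y ^ 2)⁻¹)⁻¹)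
    (h := fun _ => 1)
  · have h0 : Tendsto (fun y : ℝ => (y ^ 2)⁻¹) atTop (𝓝 0) :=
      tendsto_inv_atTop_zero.comp (tendsto_pow_atTop two_ne_zero)
    have := ((tendsto_const_nhds (x := (1:ℝ))).add h0).inv₀ (by norm_num)
    simpa using this
  · exact tendsto_const_nhds
  · filter_upwards [eventually_gt_atTop 0] with y hy
    have hlow := tail_lower' hy
    have hpos : (0:ℝ) < 1 + (y ^ 2)⁻¹ := by positivity
    rw [le_div_iff₀ (Real.exp_pos _)]
    have h1 : rexp (-(y ^ 2) / 2) ≤ (1 + (y ^ 2)⁻¹) * (∫ t in Ioi y, rexp (-(t ^ 2) / 2)) * y :=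
      (div_le_iff₀ hy).mp hlow
    calc (1 + (y ^ 2)⁻¹)⁻¹ * rexp (-(y ^ 2) / 2)
        ≤ (1 + (y ^ 2)⁻¹)⁻¹ * ((1 + (y ^ 2)⁻¹) * (∫ t in Ioi y, rexp (-(t ^ 2) / 2)) * y) :=
          mul_le_mul_of_nonneg_left h1 (inv_nonneg.mpr hpos.le)
      _ = (∫ t in Ioi y, rexp (-(t ^ 2) / 2)) * y := by field_simp
  · filter_upwards [eventually_gt_atTop 0] with y hy
    have hup := tail_upper' hy
    rw [div_le_one (Real.exp_pos _)]
    exact (le_div_iff₀ hy).mp hup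

end Aux

/-- **Convolution of normal and exponential tails, normal-dominated case.** If
`(x_N - μ η_N²)/(√2 η_N) → ∞`, then `ℙ(η_N X + E/μ > x_N)` is asymptotically equivalent to
`η_N e^{-x_N²/(2η_N²)}/(√(2π) x_N) + e^{(μ/2)(μη_N² - 2x_N)}`. -/
theorem convolution_normal_exponential_normal_dominated
    {Ω : Type*} [MeasureSpace Ω] [IsProbabilityMeasure (ℙ : Measure Ω)]
    (X E : Ω → ℝ)
    (hX : Measure.map X (ℙ : Measure Ω) = gaussianReal 0 1)
    (hE : Measure.map E (ℙ : Measure Ω) = expMeasure 1)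
    (hXE : IndepFun X E (ℙ : Measure Ω))
    (η x : ℕ → ℝ) (hη : ∀ N, 0 < η N)
    (hx : Tendsto x atTop atTop)
    (hxη : Tendsto (fun N => x N / η N) atTop atTop)
    (μ : ℝ) (hμ : 0 < μ)
    (hc : Tendsto (fun N => (x N - μ * (η N) ^ 2) / (Real.sqrt 2 * η N)) atTop atTop) :
    (fun N : ℕ => (ℙ {ω | η N * X ω + E ω / μ > x N}).toReal) ~[atTop]
      (fun N : ℕ =>
        η N * Real.exp (-(x N) ^ 2 / (2 * (η N) ^ 2)) / (Real.sqrt (2 * π) * x N)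
          + Real.exp (μ / 2 * (μ * (η N) ^ 2 - 2 * x N))) := by
  haveI : IsProbabilityMeasure (expMeasure 1) := isProbabilityMeasure_expMeasure one_pos
  have hXm : AEMeasurable X (ℙ : Measure Ω) :=
    aemeasurable_of_map_neZero (by rw [hX]; infer_instance)
  have hEm : AEMeasurable E (ℙ : Measure Ω) :=
    aemeasurable_of_map_neZero (by rw [hE]; infer_instance)
  have hmap : Measure.map (fun ω => (X ω, E ω)) (ℙ : Measure Ω)
      = (gaussianReal 0 1).prod (expMeasure 1) := by
    rw [← hX, ← hE]
    exact (indepFun_iff_map_prod_eq_prod_map_map hXm hEm).mp hXE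
  -- abbreviations
  set A : ℕ → ℝ := fun N => (gaussianReal 0 1 (Ioi (x N / η N))).toReal with hA
  set Φ : ℕ → ℝ := fun N => (gaussianReal 0 1 (Iic ((x N - μ * (η N) ^ 2) / η N))).toReal with hΦ
  set c : ℕ → ℝ := fun N => rexp (μ / 2 * (μ * (η N) ^ 2 - 2 * x N)) with hcdef
  set a : ℕ → ℝ := fun N =>
    η N * rexp (-(x N) ^ 2 / (2 * (η N) ^ 2)) / (Real.sqrt (2 * π) * x N) with hadef
  -- exact formula
  have hPt : ∀ N, (ℙ {ω | η N * X ω + E ω / μ > x N}).toReal = A N + c N * Φ N := by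
    intro N
    have hS : MeasurableSet {p : ℝ × ℝ | η N * p.1 + p.2 / μ > x N} := by
      apply measurableSet_lt measurable_const
      fun_prop
    have hset : {ω | η N * X ω + E ω / μ > x N}
        = (fun ω => (X ω, E ω)) ⁻¹' {p : ℝ × ℝ | η N * p.1 + p.2 / μ > x N} := rfl
    rw [hset, ← Measure.map_apply_of_aemeasurable (hXm.prodMk hEm) hS, hmap,
      prod_formula' (hη N) hμ, ENNReal.toReal_add (measure_ne_top _ _)
        (ENNReal.mul_ne_top ENNReal.ofReal_ne_top (measure_ne_top _ _)),
      ENNReal.toReal_mul, ENNReal.toReal_ofReal (Real.exp_nonneg _)]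
  have hsq : (0:ℝ) < Real.sqrt (2 * π) := Real.sqrt_pos.mpr (by positivity)
  -- first ratio
  have hr : Tendsto (fun N => A N / a N) atTop (𝓝 1) := by
    have h1 : Tendsto (fun N => A N /
        (rexp (-((x N / η N) ^ 2) / 2) / (Real.sqrt (2 * π) * (x N / η N)))) atTop (𝓝 1) :=
      mills'.comp hxη
    apply h1.congr'
    filter_upwards [hx.eventually (eventually_gt_atTop 0)] with N hxN
    congr 1
    have hηN := hη N
    rw [hadef]
    have h2 : -((x N / η N) ^ 2) / 2 = -(x N) ^ 2 / (2 * (η N) ^ 2) := by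
      field_simp
    rw [h2]
    field_simp [hxN.ne', hηN.ne', hsq.ne']
  -- second ratio
  have hz : Tendsto (fun N => (x N - μ * (η N) ^ 2) / η N) atTop atTop := by
    have hs2 : (0:ℝ) < Real.sqrt 2 := Real.sqrt_pos.mpr (by norm_num)
    have := hc.const_mul_atTop hs2
    apply this.congr
    intro N
    field_simp
  have hs : Tendsto Φ atTop (𝓝 1) := by
    have h1 : Tendsto (fun z : ℝ => gaussianReal 0 1 (Iic z)) atTop
        (𝓝 (gaussianReal 0 1 univ)) := tendsto_measure_Iic_atTop _
    rw [measure_univ] at h1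
    have h2 := (ENNReal.tendsto_toReal ENNReal.one_ne_top).comp (h1.comp hz)
    exact h2
  -- eventual positivity
  have hev : ∀ᶠ N in atTop, 0 < a N := by
    filter_upwards [hx.eventually (eventually_gt_atTop 0)] with N hxN
    have := hη N
    positivity
  have hcpos : ∀ N, 0 < c N := fun N => Real.exp_pos _
  -- combine
  have hgne : ∀ᶠ N in atTop, (η N * Real.exp (-(x N) ^ 2 / (2 * (η N) ^ 2))
      / (Real.sqrt (2 * π) * x N) + Real.exp (μ / 2 * (μ * (η N) ^ 2 - 2 * x N))) ≠ 0 := by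
    filter_upwards [hev] with N haN
    have hcN := hcpos N
    have : (0:ℝ) < a N + c N := by linarith
    exact this.ne'
  rw [isEquivalent_iff_tendsto_one hgne]
  have key : Tendsto (fun N => (A N + c N * Φ N) / (a N + c N) - 1) atTop (𝓝 0) := by
    apply squeeze_zero_norm' (a := fun N => |A N / a N - 1| + |Φ N - 1|)
    · filter_upwards [hev] with N haN
      have hcN := hcpos N
      have hgN : (0:ℝ) < a N + c N := by linarith
      have hAeq : A N = (A N / a N) * a N := (div_mul_cancel₀ _ haN.ne').symm
      rw [Real.norm_eq_abs, div_sub_one hgN.ne']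
      rw [abs_div, abs_of_pos hgN, div_le_iff₀ hgN]
      have hnum : A N + c N * Φ N - (a N + c N)
          = (A N / a N - 1) * a N + (Φ N - 1) * c N := by
        rw [sub_mul, div_mul_cancel₀ _ haN.ne', one_mul]; ring
      rw [hnum]
      calc |(A N / a N - 1) * a N + (Φ N - 1) * c N|
          ≤ |(A N / a N - 1) * a N| + |(Φ N - 1) * c N| := abs_add_le _ _
        _ = |A N / a N - 1| * a N + |Φ N - 1| * c N := by
            rw [abs_mul, abs_mul, abs_of_pos haN, abs_of_pos hcN]
        _ ≤ (|A N / a N - 1| + |Φ N - 1|) * (a N + c N) := by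
            have h1 : (0:ℝ) ≤ |A N / a N - 1| := abs_nonneg _
            have h2 : (0:ℝ) ≤ |Φ N - 1| := abs_nonneg _
            nlinarith
    · have := ((hr.sub_const 1).abs.add ((hs.sub_const 1).abs))
      simpa using this
  rw [tendsto_sub_nhds_zero_iff] at key
  apply key.congr'
  filter_upwards with N
  simp only [Pi.div_apply, hPt N, hadef, hcdef]

end
end

section
/- Exponent comparison with equality exactly at the critical point: for β>0, σ>0, σ_A>0 and all a>0, (2aβ + 2σ² − 2σ√(2aβ+σ²))/σ_A² ≥ (2aβ − σ_A²)/(σ²+σ_A²), with equality if and only if a = a*, where a* = σ_A⁴/(2βσ²) + σ_A²/β. -/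
open Real

/-- **Exponent comparison with equality exactly at the critical point.** For `β, σ, σ_A > 0`
and all `a > 0`,
`(2aβ + 2σ² - 2σ√(2aβ+σ²))/σ_A² ≥ (2aβ - σ_A²)/(σ² + σ_A²)`,
with equality iff `a = a⋆ = σ_A⁴/(2βσ²) + σ_A²/β`. -/
theorem exponent_comparison (β σ σA : ℝ) (hβ : 0 < β) (hσ : 0 < σ) (hσA : 0 < σA)
    (a : ℝ) (ha : 0 < a) :
    (2 * a * β - σA ^ 2) / (σ ^ 2 + σA ^ 2)
      ≤ (2 * a * β + 2 * σ ^ 2 - 2 * σ * Real.sqrt (2 * a * β + σ ^ 2)) / σA ^ 2 ∧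
    ((2 * a * β + 2 * σ ^ 2 - 2 * σ * Real.sqrt (2 * a * β + σ ^ 2)) / σA ^ 2
        = (2 * a * β - σA ^ 2) / (σ ^ 2 + σA ^ 2)
      ↔ a = σA ^ 4 / (2 * β * σ ^ 2) + σA ^ 2 / β) := by
  have hpos : (0:ℝ) < 2 * a * β + σ ^ 2 := by positivity
  set s := Real.sqrt (2 * a * β + σ ^ 2) with hsdef
  have hs2 : s ^ 2 = 2 * a * β + σ ^ 2 := Real.sq_sqrt hpos.le
  have hs : 0 < s := Real.sqrt_pos.mpr hpos
  have hA : (0:ℝ) < σA ^ 2 := by positivity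
  have hB : (0:ℝ) < σ ^ 2 + σA ^ 2 := by positivity
  constructor
  · rw [div_le_div_iff₀ hB hA]
    nlinarith [sq_nonneg (σ * s - σ ^ 2 - σA ^ 2)]
  · rw [div_eq_div_iff hA.ne' hB.ne']
    constructor
    · intro h
      have hz : (σ * s - σ ^ 2 - σA ^ 2) ^ 2 = 0 := by nlinarith
      have hkey : σ * s = σ ^ 2 + σA ^ 2 := by
        have := pow_eq_zero_iff (n := 2) (by norm_num) |>.mp hz
        linarith
      have h2 : σ ^ 2 * (2 * a * β + σ ^ 2) = (σ ^ 2 + σA ^ 2) ^ 2 := by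
        nlinarith
      field_simp
      nlinarith
    · intro h
      subst h
      have hval : s = (σ ^ 2 + σA ^ 2) / σ := by
        rw [hsdef, show 2 * (σA ^ 4 / (2 * β * σ ^ 2) + σA ^ 2 / β) * β + σ ^ 2
            = ((σ ^ 2 + σA ^ 2) / σ) ^ 2 by field_simp; ring]
        exact Real.sqrt_sq (by positivity)
      rw [hval]; field_simp; ring
end
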